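/- In ℚ⟨x,y⟩ with the Poisson bracket {f,g} = [f,g] + D_f(g) - D_g(f) (where D_f is the derivation with D_f(x)=0, D_f(y)=[y,f]), for any polynomials f, g one has [D_f, D_g] = D_{{f,g}} as derivations of ℚ⟨x,y⟩, i.e. D_f∘D_g - D_g∘D_f = D_{[f,g] + D_f(g) - D_g(f)}. -/

import Mathlib

noncomputable abbrev FA : Type := MonoidAlgebra ℚ (FreeMonoid (Fin 2))

noncomputable def fx : FA := MonoidAlgebra.of ℚ (FreeMonoid (Fin 2)) (FreeMonoid.of 0)

noncomputable def fy : FA := MonoidAlgebra.of ℚ (FreeMonoid (Fin 2)) (FreeMonoid.of 1)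

theorem bracket_of_derivations_is_poisson
    (f g : FA) (Df Dg Dh : FA →ₗ[ℚ] FA)
    (hDf : ∀ a b : FA, Df (a * b) = Df a * b + a * Df b)
    (hDfx : Df fx = 0) (hDfy : Df fy = fy * f - f * fy)
    (hDg : ∀ a b : FA, Dg (a * b) = Dg a * b + a * Dg b)
    (hDgx : Dg fx = 0) (hDgy : Dg fy = fy * g - g * fy)
    (hDh : ∀ a b : FA, Dh (a * b) = Dh a * b + a * Dh b)
    (hDhx : Dh fx = 0)
    (hDhy : Dh fy = fy * (f * g - g * f + Df g - Dg f)
      - (f * g - g * f + Df g - Dg f) * fy) :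
    ∀ a : FA, Df (Dg a) - Dg (Df a) = Dh a := by
  intro a
  -- Leibniz rule for the commutator
  have hE : ∀ u v : FA, Df (Dg (u * v)) - Dg (Df (u * v))
      = (Df (Dg u) - Dg (Df u)) * v + u * (Df (Dg v) - Dg (Df v)) := by
    intro u v
    rw [hDg u v, map_add, hDf u v, map_add, hDf (Dg u) v, hDf u (Dg v),
        hDg (Df u) v, hDg u (Df v)]
    noncomm_ring
  have h1 : ∀ (D : FA →ₗ[ℚ] FA), (∀ u v : FA, D (u * v) = D u * v + u * D v) → D 1 = 0 := by
    intro D h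
    have := h 1 1
    simp only [one_mul, mul_one] at this
    exact (left_eq_add.mp this)
  have hx : Df (Dg fx) - Dg (Df fx) = Dh fx := by
    rw [hDfx, hDgx, map_zero, map_zero, hDhx]; simp
  have hy : Df (Dg fy) - Dg (Df fy) = Dh fy := by
    rw [hDfy, hDgy, hDhy, map_sub, map_sub, hDf fy g, hDf g fy, hDg fy f, hDg f fy,
        hDfy, hDgy]
    noncomm_ring
  have hgen : ∀ i : Fin 2,
      Df (Dg (MonoidAlgebra.of ℚ (FreeMonoid (Fin 2)) (FreeMonoid.of i)))
        - Dg (Df (MonoidAlgebra.of ℚ (FreeMonoid (Fin 2)) (FreeMonoid.of i)))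
      = Dh (MonoidAlgebra.of ℚ (FreeMonoid (Fin 2)) (FreeMonoid.of i)) := by
    intro i
    fin_cases i
    · exact hx
    · exact hy
  induction a using MonoidAlgebra.induction_on with
  | of m =>
    induction m using FreeMonoid.inductionOn' with
    | one =>
      rw [map_one, h1 Df hDf, h1 Dg hDg, h1 Dh hDh, map_zero, map_zero, sub_zero]
    | of_mul i m ih =>
      rw [map_mul, hE, hDh, hgen i, ih]
  | add p q hp hq =>
    rw [map_add, map_add, map_add, map_add, map_add, ← hp, ← hq]
    abel
  | smul r p hp =>
    rw [map_smul, map_smul, map_smul, map_smul, map_smul, ← hp, smul_sub]
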